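/- Suppose the positive messages {m̃_{a→i}(x_i), ñ_{i→a}(x_i)} (a ∈ A, i ∈ N(a)) solve the scaled BP fixed-point equations m̃_{a→i}(x_i) = ω_{a,i} ∑_{x_a\x_i} f_a(x_a) ∏_{j∈N(a)\i} ñ_{j→a}(x_j) and ñ_{i→a}(x_i) = ∏_{c∈N(i)\a} m̃_{c→i}(x_i), where the ω_{a,i} are arbitrary positive constants, and define z̃_a := 1/(∑_{x_a} f_a(x_a) ∏_{i∈N(a)} ñ_{i→a}(x_i)) for all a ∈ A. Then there exist positive constants κ_{a,i}, τ_{a,i} such that the rescaled messages m_{a→i} = m̃_{a→i}/κ_{a,i}, n_{i→a} = ñ_{i→a}/τ_{a,i} solve the normalized BP fixed-point equations m_{a→i}(x_i) = z_a ∑_{x_a\x_i} f_a(x_a) ∏_{j∈N(a)\i} n_{j→a}(x_j) and n_{i→a}(x_i) = ∏_{c∈N(i)\a} m_{c→i}(x_i), where z_a is the positive constant making b_a(x_a) := z_a f_a(x_a) ∏_{i∈N(a)} n_{i→a}(x_i) sum to one, if and only if there exist positive constants g_i (i ∈ I) such that ω_{a,i} = g_i · z̃_a for all a ∈ A and i ∈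 N(a). -/

import Mathlib

open Finset

lemma aux1 {γ δ : Type} [Fintype γ] (P : γ → Prop) [DecidablePred P] (F : γ → ℝ)
    (t : Finset δ) (u : γ → δ → ℝ) (v : δ → ℝ) :
    ∑ x : γ, (if P x then F x * ∏ j ∈ t, u x j / v j else 0) =
      (∑ x : γ, if P x then F x * ∏ j ∈ t, u x j else 0) / ∏ j ∈ t, v j := by
  rw [Finset.sum_div]
  refine Finset.sum_congr rfl fun x _ => ?_
  split_ifs with h
  · rw [Finset.prod_div_distrib, mul_div_assoc]
  · simp

lemma aux2 {γ δ : Type} [Fintype γ] (F : γ → ℝ)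
    (t : Finset δ) (u : γ → δ → ℝ) (v : δ → ℝ) :
    ∑ x : γ, F x * ∏ j ∈ t, u x j / v j =
      (∑ x : γ, F x * ∏ j ∈ t, u x j) / ∏ j ∈ t, v j := by
  rw [Finset.sum_div]
  refine Finset.sum_congr rfl fun x _ => ?_
  rw [Finset.prod_div_distrib, mul_div_assoc]

lemma key_fwd (w k t Z ztv s Sf P Q G : ℝ) (hs : s ≠ 0) (hSf : Sf ≠ 0) (hP : P ≠ 0)
    (hk : k ≠ 0) (ht : t ≠ 0)
    (E1 : t = Q) (E2 : Z * (Sf / (t * P)) = 1) (E3 : w * s / k = Z * (s / P))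
    (E4 : ztv = 1 / Sf) (E5 : G = k * Q) : w = G * ztv := by
  subst E4 E5 E1
  field_simp at E2 E3 ⊢
  have h : w * Sf * P = k * t * P := by
    linear_combination Sf * E3 + k * E2
  exact mul_right_cancel₀ hP (by linear_combination h)

lemma key_bwd4 (Sf P : ℝ) (hSf : Sf ≠ 0) (hP : P ≠ 0) : 1 / Sf * P * (Sf / P) = 1 := by
  field_simp

lemma key_bwd (gi k t ztv s Pf : ℝ) (hk : k ≠ 0) (hPf : Pf ≠ 0) (hg : k * t = gi) :
    gi * ztv * s / k = ztv * (t * Pf) * (s / Pf) := by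
  subst hg; field_simp

abbrev Cfg {ι : Type} (S : ι → Type) (t : Finset ι) : Type :=
  ∀ j : {x // x ∈ t}, S j.1

theorem statement0
    {ι α : Type} [Fintype ι] [Fintype α] [DecidableEq ι] [DecidableEq α]
    (S : ι → Type) [∀ i, Fintype (S i)] [∀ i, Nonempty (S i)] [∀ i, DecidableEq (S i)]
    (N : α → Finset ι)
    (hNi : ∀ i : ι, ∃ a : α, i ∈ N a)
    (f : ∀ a : α, Cfg S (N a) → ℝ) (hf : ∀ a xa, 0 < f a xa)
    (ω : α → ι → ℝ) (hω : ∀ a : α, ∀ i ∈ N a, 0 < ω a i)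
    (mt : α → ∀ i : ι, S i → ℝ) (nt : ∀ i : ι, α → S i → ℝ)
    (hmtpos : ∀ a : α, ∀ i ∈ N a, ∀ xi, 0 < mt a i xi)
    (hntpos : ∀ i : ι, ∀ a : α, i ∈ N a → ∀ xi, 0 < nt i a xi)
    (heqm : ∀ a : α, ∀ i : ι, ∀ hi : i ∈ N a, ∀ xi : S i,
      mt a i xi = ω a i * ∑ xa : Cfg S (N a),
        (if xa ⟨i, hi⟩ = xi then
          f a xa * ∏ j ∈ univ.filter (fun j : {x // x ∈ N a} => j.1 ≠ i), nt j.1 a (xa j)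
        else 0))
    (heqn : ∀ i : ι, ∀ a : α, i ∈ N a → ∀ xi : S i,
      nt i a xi = ∏ c ∈ (univ.filter (fun c : α => i ∈ N c)).erase a, mt c i xi)
    (zt : α → ℝ)
    (hden : ∀ a : α,
      0 < ∑ xa : Cfg S (N a), f a xa * ∏ j : {x // x ∈ N a}, nt j.1 a (xa j))
    (hzt : ∀ a : α,
      zt a = 1 / ∑ xa : Cfg S (N a), f a xa * ∏ j : {x // x ∈ N a}, nt j.1 a (xa j)) :
    (∃ (κ τ : α → ι → ℝ) (z : α → ℝ),
      (∀ a : α, ∀ i ∈ N a, 0 < κ a i) ∧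
      (∀ a : α, ∀ i ∈ N a, 0 < τ a i) ∧
      (∀ a : α, 0 < z a) ∧
      (∀ a : α,
        z a * ∑ xa : Cfg S (N a),
          f a xa * ∏ j : {x // x ∈ N a}, nt j.1 a (xa j) / τ a j.1 = 1) ∧
      (∀ a : α, ∀ i : ι, ∀ hi : i ∈ N a, ∀ xi : S i,
        mt a i xi / κ a i = z a * ∑ xa : Cfg S (N a),
          (if xa ⟨i, hi⟩ = xi then
            f a xa * ∏ j ∈ univ.filter (fun j : {x // x ∈ N a} => j.1 ≠ i),
              nt j.1 a (xa j) / τ a j.1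
          else 0)) ∧
      (∀ i : ι, ∀ a : α, i ∈ N a → ∀ xi : S i,
        nt i a xi / τ a i =
          ∏ c ∈ (univ.filter (fun c : α => i ∈ N c)).erase a, mt c i xi / κ c i))
    ↔ (∃ g : ι → ℝ, (∀ i, 0 < g i) ∧ ∀ a : α, ∀ i ∈ N a, ω a i = g i * zt a) := by
  classical
  have hztpos : ∀ a, 0 < zt a := fun a => by
    rw [hzt]; exact one_div_pos.mpr (hden a)
  have hfilter : ∀ (a : α) (i : ι) (hi : i ∈ N a),
      univ.filter (fun j : {x // x ∈ N a} => j.1 ≠ i) = univ.erase ⟨i, hi⟩ := by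
    intro a i hi
    ext j
    simp [Finset.mem_erase, Subtype.ext_iff]
  constructor
  · rintro ⟨κ, τ, z, hκp, hτp, hzp, h4, h5, h6⟩
    refine ⟨fun i => ∏ c ∈ univ.filter (fun c : α => i ∈ N c), κ c i,
      fun i => Finset.prod_pos fun c hc => hκp c i (Finset.mem_filter.mp hc).2, ?_⟩
    intro a i hi
    show ω a i = (∏ c ∈ univ.filter (fun c : α => i ∈ N c), κ c i) * zt a
    obtain xi := Classical.arbitrary (S i)
    have hSvpos : 0 < ∑ xa : Cfg S (N a),
        (if xa ⟨i, hi⟩ = xi then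
          f a xa * ∏ j ∈ univ.filter (fun j : {x // x ∈ N a} => j.1 ≠ i), nt j.1 a (xa j)
        else 0) := by
      have h := heqm a i hi xi
      nlinarith [hmtpos a i hi xi, hω a i hi]
    have hκpe : 0 < ∏ c ∈ (univ.filter (fun c : α => i ∈ N c)).erase a, κ c i :=
      Finset.prod_pos fun c hc =>
        hκp c i (Finset.mem_filter.mp (Finset.mem_of_mem_erase hc)).2
    have hτeq : τ a i = ∏ c ∈ (univ.filter (fun c : α => i ∈ N c)).erase a, κ c i := by
      have h := h6 i a hi xi
      rw [Finset.prod_div_distrib, ← heqn i a hi xi] at h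
      have hnt := hntpos i a hi xi
      have hτ0 := (hτp a i hi).ne'
      have hκ0 := hκpe.ne'
      field_simp at h
      exact h.symm
    have hPf : 0 < ∏ j ∈ univ.filter (fun j : {x // x ∈ N a} => j.1 ≠ i), τ a j.1 :=
      Finset.prod_pos fun j hj => hτp a j.1 j.2
    have hsplit : (∏ j : {x // x ∈ N a}, τ a j.1)
        = τ a i * ∏ j ∈ univ.filter (fun j : {x // x ∈ N a} => j.1 ≠ i), τ a j.1 := by
      rw [hfilter a i hi]
      exact (Finset.mul_prod_erase univ (fun j : {x // x ∈ N a} => τ a j.1)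
        (Finset.mem_univ ⟨i, hi⟩)).symm
    have hgsplit : (∏ c ∈ univ.filter (fun c : α => i ∈ N c), κ c i)
        = κ a i * ∏ c ∈ (univ.filter (fun c : α => i ∈ N c)).erase a, κ c i :=
      (Finset.mul_prod_erase _ (fun c => κ c i)
        (Finset.mem_filter.mpr ⟨Finset.mem_univ a, hi⟩)).symm
    have E2 : z a * ((∑ xa : Cfg S (N a), f a xa * ∏ j : {x // x ∈ N a}, nt j.1 a (xa j))
        / (τ a i * ∏ j ∈ univ.filter (fun j : {x // x ∈ N a} => j.1 ≠ i), τ a j.1)) = 1 := by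
      have h := h4 a
      rw [aux2, hsplit] at h
      exact h
    have E3 : ω a i * (∑ xa : Cfg S (N a),
        (if xa ⟨i, hi⟩ = xi then
          f a xa * ∏ j ∈ univ.filter (fun j : {x // x ∈ N a} => j.1 ≠ i), nt j.1 a (xa j)
        else 0)) / κ a i = z a * ((∑ xa : Cfg S (N a),
        (if xa ⟨i, hi⟩ = xi then
          f a xa * ∏ j ∈ univ.filter (fun j : {x // x ∈ N a} => j.1 ≠ i), nt j.1 a (xa j)
        else 0)) / ∏ j ∈ univ.filter (fun j : {x // x ∈ N a} => j.1 ≠ i), τ a j.1) := by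
      have h := h5 a i hi xi
      rw [aux1, heqm a i hi xi] at h
      exact h
    exact key_fwd _ _ _ _ _ _ _ _ _ _ hSvpos.ne' (hden a).ne' hPf.ne'
      (hκp a i hi).ne' (hτp a i hi).ne' hτeq E2 E3 (hzt a) hgsplit
  · rintro ⟨g, hg, hωg⟩
    have hd1 : ∀ i, 1 ≤ (univ.filter (fun c : α => i ∈ N c)).card := by
      intro i
      obtain ⟨a, ha⟩ := hNi i
      exact Finset.card_pos.mpr ⟨a, Finset.mem_filter.mpr ⟨Finset.mem_univ a, ha⟩⟩
    have hκpos : ∀ i : ι, (0:ℝ) <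
        g i ^ (((univ.filter (fun c : α => i ∈ N c)).card : ℝ))⁻¹ :=
      fun i => Real.rpow_pos_of_pos (hg i) _
    have hτpos : ∀ i : ι, (0:ℝ) <
        g i ^ (1 - (((univ.filter (fun c : α => i ∈ N c)).card : ℝ))⁻¹) :=
      fun i => Real.rpow_pos_of_pos (hg i) _
    have hκτ : ∀ i : ι,
        g i ^ (((univ.filter (fun c : α => i ∈ N c)).card : ℝ))⁻¹ *
          g i ^ (1 - (((univ.filter (fun c : α => i ∈ N c)).card : ℝ))⁻¹) = g i := by
      intro i
      rw [← Real.rpow_add (hg i)]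
      norm_num
    have hτκ : ∀ (a : α) (i : ι), i ∈ N a →
        (g i ^ (((univ.filter (fun c : α => i ∈ N c)).card : ℝ))⁻¹)
            ^ ((univ.filter (fun c : α => i ∈ N c)).erase a).card
          = g i ^ (1 - (((univ.filter (fun c : α => i ∈ N c)).card : ℝ))⁻¹) := by
      intro a i hi
      rw [Finset.card_erase_of_mem (Finset.mem_filter.mpr ⟨Finset.mem_univ a, hi⟩),
        ← Real.rpow_natCast (g i ^ (((univ.filter (fun c : α => i ∈ N c)).card : ℝ))⁻¹),
        ← Real.rpow_mul (hg i).le]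
      congr 1
      have hc : (((univ.filter (fun c : α => i ∈ N c)).card - 1 : ℕ) : ℝ)
          = ((univ.filter (fun c : α => i ∈ N c)).card : ℝ) - 1 := by
        rw [Nat.cast_sub (hd1 i)]; norm_num
      rw [hc]
      have hdne : (((univ.filter (fun c : α => i ∈ N c)).card : ℝ)) ≠ 0 := by
        have := hd1 i; positivity
      field_simp
    refine ⟨fun _ i => g i ^ (((univ.filter (fun c : α => i ∈ N c)).card : ℝ))⁻¹,
      fun _ i => g i ^ (1 - (((univ.filter (fun c : α => i ∈ N c)).card : ℝ))⁻¹),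
      fun a => zt a * ∏ j : {x // x ∈ N a},
        g j.1 ^ (1 - (((univ.filter (fun c : α => j.1 ∈ N c)).card : ℝ))⁻¹),
      fun a i _ => hκpos i, fun a i _ => hτpos i,
      fun a => mul_pos (hztpos a) (Finset.prod_pos fun j _ => hτpos j.1), ?_, ?_, ?_⟩
    · intro a
      dsimp only
      rw [aux2, hzt]
      have hP : (0:ℝ) < ∏ j : {x // x ∈ N a},
          g j.1 ^ (1 - (((univ.filter (fun c : α => j.1 ∈ N c)).card : ℝ))⁻¹) :=
        Finset.prod_pos fun j _ => hτpos j.1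
      exact key_bwd4 _ _ (hden a).ne' hP.ne'
    · intro a i hi xi
      dsimp only
      rw [aux1, heqm a i hi xi, hωg a i hi]
      have hsplit : (∏ j : {x // x ∈ N a},
          g j.1 ^ (1 - (((univ.filter (fun c : α => j.1 ∈ N c)).card : ℝ))⁻¹))
          = g i ^ (1 - (((univ.filter (fun c : α => i ∈ N c)).card : ℝ))⁻¹) *
            ∏ j ∈ univ.filter (fun j : {x // x ∈ N a} => j.1 ≠ i),
              g j.1 ^ (1 - (((univ.filter (fun c : α => j.1 ∈ N c)).card : ℝ))⁻¹) := by
        rw [hfilter a i hi]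
        exact (Finset.mul_prod_erase univ
          (fun j : {x // x ∈ N a} =>
            g j.1 ^ (1 - (((univ.filter (fun c : α => j.1 ∈ N c)).card : ℝ))⁻¹))
          (Finset.mem_univ ⟨i, hi⟩)).symm
      rw [hsplit]
      have hPf : (0:ℝ) < ∏ j ∈ univ.filter (fun j : {x // x ∈ N a} => j.1 ≠ i),
          g j.1 ^ (1 - (((univ.filter (fun c : α => j.1 ∈ N c)).card : ℝ))⁻¹) :=
        Finset.prod_pos fun j _ => hτpos j.1
      exact key_bwd _ _ _ _ _ _ (hκpos i).ne' hPf.ne' (hκτ i)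
    · intro i a hi xi
      dsimp only
      rw [Finset.prod_div_distrib, ← heqn i a hi xi, Finset.prod_const, hτκ a i hi]
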